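/- Let q be a power of an odd prime p, let F be a finite field with q elements, and let E be a field extension of F of degree 2 (so E has q² elements). Then the span of the set of roots of unity μ_{2(q-1)}(E) = {x ∈ E : x^{2(q-1)} = 1} over the prime field 𝔽_p is all of E. -/
import Mathlib


/-- If `F` is a finite field with `q = p^f` elements (`p` an odd prime) and
`E/F` a field extension of degree 2 (so `E` has `q²` elements), then the `𝔽_p`-span of
`μ_{2(q-1)}(E) = {x ∈ E : x^{2(q-1)} = 1}` is all of `E`. -/
theorem span_roots_of_unity
    (p f : ℕ) (hp : p.Prime) (hodd : Odd p) (hf : 0 < f)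
    (F : Type) [Field F] [Fintype F] (hF : Fintype.card F = p ^ f)
    (E : Type) [Field E] [Algebra F E] (hrank : Module.finrank F E = 2)
    [CharP E p] :
    letI : Algebra (ZMod p) E := ZMod.algebra E p
    Submodule.span (ZMod p) {x : E | x ^ (2 * (p ^ f - 1)) = 1} = ⊤ := by
  letI : Algebra (ZMod p) E := ZMod.algebra E p
  set q := p ^ f with hq
  have hq3 : 3 ≤ q := by
    have h2 := hp.two_le
    have hp3 : 3 ≤ p := by obtain ⟨k, hk⟩ := hodd; omega
    calc 3 ≤ p := hp3
    _ ≤ q := Nat.le_self_pow hf.ne' p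
  have hqodd : Odd q := hodd.pow
  have h2dvd : 2 ∣ q + 1 := by obtain ⟨k, hk⟩ := hqodd; omega
  have key : (q + 1) * (q - 1) = q * q - 1 := by
    zify [show 1 ≤ q by omega, show 1 ≤ q * q by nlinarith]; ring
  have hhalf : (q + 1) / 2 * 2 = q + 1 := Nat.div_mul_cancel h2dvd
  have hfd : FiniteDimensional F E := FiniteDimensional.of_finrank_pos (by rw [hrank]; norm_num)
  letI : Finite E := Module.finite_of_finite F
  letI : DecidableEq E := Classical.decEq E
  letI : Fintype E := Fintype.ofFinite E
  have hcardE : Fintype.card E = q * q := by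
    rw [Module.card_fintype (Module.finBasis F E), hF, hrank]
    simp [sq]
  -- generator of Eˣ
  obtain ⟨g, hg⟩ := IsCyclic.exists_generator (α := Eˣ)
  have horder : orderOf g = q * q - 1 := by
    rw [orderOf_eq_card_of_forall_mem_zpowers hg, Nat.card_eq_fintype_card,
      Fintype.card_units, hcardE]
  set y : E := (g : E) ^ ((q + 1) / 2) with hy
  have hy0 : y ≠ 0 := pow_ne_zero _ (Units.ne_zero g)
  -- y ^ (2*(q-1)) = 1
  have hyS : y ^ (2 * (q - 1)) = 1 := by
    have h1 : (g : E) ^ (q * q - 1) = 1 := by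
      have := FiniteField.pow_card_sub_one_eq_one (g : E) (Units.ne_zero g)
      rwa [hcardE] at this
    rw [hy, ← pow_mul]
    have : (q + 1) / 2 * (2 * (q - 1)) = q * q - 1 := by
      rw [← mul_assoc, hhalf, key]
    rw [this, h1]
  -- y ^ (q-1) ≠ 1
  have hyq : y ^ (q - 1) ≠ 1 := by
    set t := (q + 1) / 2 * (q - 1) with ht
    have h2t : 2 * t = q * q - 1 := by
      rw [ht, ← mul_assoc, mul_comm 2 ((q+1)/2), hhalf, key]
    have htpos : 0 < t :=
      Nat.mul_pos (Nat.div_pos (by omega) (by norm_num)) (by omega)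
    intro hcon
    rw [hy, ← pow_mul] at hcon
    have hu : (g ^ t : Eˣ) = 1 := by
      apply Units.ext
      rw [Units.val_pow_eq_pow_val, Units.val_one]
      exact hcon
    have hdvd : orderOf g ∣ t := orderOf_dvd_of_pow_eq_one hu
    rw [horder] at hdvd
    have := Nat.le_of_dvd htpos hdvd
    omega
  -- y is not in the image of F
  have hyF : ∀ a : F, algebraMap F E a ≠ y := by
    intro a hay
    have ha0 : a ≠ 0 := by
      rintro rfl
      rw [map_zero] at hay
      exact hy0 hay.symm
    have ha1 : a ^ (q - 1) = 1 := by
      have := FiniteField.pow_card_sub_one_eq_one a ha0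
      rwa [hF] at this
    apply hyq
    rw [← hay, ← map_pow, ha1, map_one]
  -- {y, 1} spans E over F
  have hli : LinearIndependent F ![y, (1 : E)] := by
    rw [linearIndependent_fin2]
    refine ⟨one_ne_zero, fun a h => ?_⟩
    apply hyF a
    rw [Algebra.algebraMap_eq_smul_one]
    simpa using h
  have hsp : Submodule.span F {y, (1 : E)} = ⊤ := by
    have := hli.span_eq_top_of_card_eq_finrank (by simp [hrank])
    rw [show Set.range ![y, (1:E)] = {y, (1:E)} by
      ext x; simp [Fin.exists_fin_two]; tauto] at this
    exact this
  -- conclude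
  rw [eq_top_iff]
  rintro z -
  have hz : z ∈ Submodule.span F {y, (1 : E)} := hsp ▸ Submodule.mem_top
  rw [Submodule.mem_span_pair] at hz
  obtain ⟨a, b, hab⟩ := hz
  rw [← hab]
  have hpow : ∀ c : F, c ≠ 0 → c ^ (2 * (q - 1)) = 1 := by
    intro c hc
    have h1 := FiniteField.pow_card_sub_one_eq_one c hc
    rw [hF] at h1
    rw [mul_comm, pow_mul, h1, one_pow]
  refine Submodule.add_mem _ ?_ ?_
  · rcases eq_or_ne a 0 with rfl | ha
    · simp
    · apply Submodule.subset_span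
      show (a • y) ^ (2 * (q - 1)) = 1
      rw [Algebra.smul_def, mul_pow, ← map_pow, hpow a ha, map_one, one_mul, hyS]
  · rcases eq_or_ne b 0 with rfl | hb
    · simp
    · apply Submodule.subset_span
      show (b • (1 : E)) ^ (2 * (q - 1)) = 1
      rw [Algebra.smul_def, mul_one, ← map_pow, hpow b hb, map_one]
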